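/- arXiv:1206.0228 — 2 statements merged into one kernel-verified Lean document; each statement's English description precedes it below -/
import Mathlib

section
/- Let $P$ be an even polynomial with complex coefficients and let $s > 0$. For $\mathrm{Re}(z)$ sufficiently large define $F(z) = \int_0^\infty t^{z-1} e^{-t s^2} \left( \int_{\mathbb{R}} e^{-t\lambda^2} P(i\lambda)\, d\lambda \right) dt$. Then $F$ extends meromorphically to $\mathbb{C}$, is regular at $z = 0$, and $F(0) = -2\pi \int_0^s P(r)\, dr$. -/
open Real Complex MeasureTheory Set

/-! ### Auxiliary lemmas -/

private lemma oddCoeff0 (P : Polynomial ℂ) (hP : ∀ x : ℂ, P.eval (-x) = P.eval x)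
    {k : ℕ} (hk : Odd k) : P.coeff k = 0 := by
  have hX : (-Polynomial.X : Polynomial ℂ) = Polynomial.C (-1) * Polynomial.X := by
    simp
  have hcomp : P.comp (-Polynomial.X) = P := by
    apply Polynomial.funext; intro x; simp [hP]
  have hc : (P.comp (-Polynomial.X)).coeff k = (-1) ^ k * P.coeff k := by
    conv_lhs => rw [Polynomial.comp, Polynomial.eval₂_eq_sum, Polynomial.sum_def]
    rw [Polynomial.finset_sum_coeff]
    rw [Finset.sum_eq_single k]
    · rw [hX, mul_pow, ← Polynomial.C_pow, ← mul_assoc, ← Polynomial.C_mul,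
        Polynomial.coeff_C_mul, Polynomial.coeff_X_pow, if_pos rfl]
      ring
    · intro b _ hb
      rw [hX, mul_pow, ← Polynomial.C_pow, ← mul_assoc, ← Polynomial.C_mul,
        Polynomial.coeff_C_mul, Polynomial.coeff_X_pow, if_neg (Ne.symm hb), mul_zero]
    · intro h
      simp [Polynomial.notMem_support_iff.mp h]
  rw [hcomp, hk.neg_one_pow] at hc
  rw [neg_one_mul, eq_neg_iff_add_eq_zero, ← two_mul] at hc
  simpa using hc

private lemma natHalfNe0 (j : ℕ) (c : ℂ) (hc : 0 < c.re) : ((j:ℂ) + c) ≠ 0 := by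
  intro h
  have := congrArg Complex.re h
  simp at this
  nlinarith [Nat.cast_nonneg (α := ℝ) j]

private lemma gammaProd0 (j : ℕ) :
    Complex.Gamma ((j : ℂ) + 1/2) * Complex.Gamma (-(j : ℂ) - 1/2)
      = (-1) ^ (j+1) * 2 * (π : ℂ) / (2 * (j:ℂ) + 1) := by
  induction j with
  | zero =>
      have hsq : Complex.Gamma (1/2 : ℂ) * Complex.Gamma (1/2 : ℂ) = (π : ℂ) := by
        rw [Complex.Gamma_one_half_eq, ← Complex.cpow_add _ _
          (Complex.ofReal_ne_zero.mpr Real.pi_ne_zero)]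
        norm_num
      have hne : (-(1:ℂ)/2) ≠ 0 := by norm_num
      have h1 : Complex.Gamma ((-(1:ℂ)/2) + 1) = (-(1:ℂ)/2) * Complex.Gamma (-(1:ℂ)/2) :=
        Complex.Gamma_add_one _ hne
      rw [show (-(1:ℂ)/2) + 1 = 1/2 by norm_num] at h1
      push_cast
      rw [show -(0:ℂ) - 1/2 = -(1:ℂ)/2 by norm_num, show (0:ℂ) + 1/2 = 1/2 by norm_num]
      have key : Complex.Gamma (1/2:ℂ) * Complex.Gamma (-(1:ℂ)/2) = -2 * π := by
        linear_combination 2 * Complex.Gamma (1/2:ℂ) * h1 - 2 * hsq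
      rw [key]; norm_num
  | succ j ih =>
      set A := Complex.Gamma ((j:ℂ) + 1/2) with hA
      set B := Complex.Gamma (-((j:ℕ)+1:ℂ) - 1/2) with hB
      have hne1 : ((j:ℂ) + 1/2) ≠ 0 := natHalfNe0 j (1/2) (by norm_num)
      have hne2 : (-(j:ℂ) - 3/2) ≠ 0 := by
        intro h
        exact natHalfNe0 j (3/2) (by norm_num) (by linear_combination -h)
      have e1 : Complex.Gamma (((j+1:ℕ) : ℂ) + 1/2) = ((j:ℂ)+1/2) * A := by
        rw [hA, ← Complex.Gamma_add_one ((j:ℂ)+1/2) hne1]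
        congr 1; push_cast; ring
      have e2 : Complex.Gamma (-(j:ℂ) - 1/2) = (-(j:ℂ)-3/2) * B := by
        have := Complex.Gamma_add_one (-(j:ℂ)-3/2) hne2
        rw [show (-(j:ℂ)-3/2) + 1 = -(j:ℂ) - 1/2 by ring] at this
        rw [this, hB]
        congr 2; push_cast; ring
      rw [e2] at ih
      have h21 : ((2:ℂ) * (j:ℂ) + 1) ≠ 0 := by
        intro h; exact natHalfNe0 j (1/2) (by norm_num) (by linear_combination h / 2)
      have h23 : ((2:ℂ) * (((j:ℕ):ℂ)+1) + 1) ≠ 0 := by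
        intro h; exact natHalfNe0 j (3/2) (by norm_num) (by linear_combination h / 2)
      have ih' : A * B * ((-(j:ℂ)-3/2) * (2*(j:ℂ)+1)) = (-1)^(j+1) * 2 * π := by
        rw [eq_div_iff h21] at ih
        linear_combination ih
      rw [e1]
      rw [eq_div_iff (by push_cast at h23 ⊢; exact h23)]
      push_cast
      calc ((j:ℂ)+1/2) * A * B * (2*((j:ℂ)+1)+1)
          = -(A * B * ((-(j:ℂ)-3/2) * (2*(j:ℂ)+1))) := by ring
        _ = -((-1)^(j+1) * 2 * π) := by rw [ih']
        _ = (-1)^(j+1+1) * 2 * π := by ring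

private lemma diff_invGamma0 (c : ℂ) :
    Differentiable ℂ (fun z => (Complex.Gamma (z - c))⁻¹) := by
  have := Complex.differentiable_one_div_Gamma
  exact this.comp (differentiable_id.sub_const c)

private lemma gamma_shift_merom0 (c : ℂ) (x : ℂ) :
    MeromorphicAt (fun z => Complex.Gamma (z - c)) x := by
  have h2 : MeromorphicAt (fun z => (Complex.Gamma (z - c))⁻¹)⁻¹ x :=
    (((diff_invGamma0 c).analyticAt x).meromorphicAt).inv
  have : (fun z => (Complex.Gamma (z - c))⁻¹)⁻¹ = fun z => Complex.Gamma (z - c) := by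
    funext z; simp
  rwa [this] at h2

private lemma gamma_shift_analytic0 (c : ℂ) (x : ℂ) (h : Complex.Gamma (x - c) ≠ 0) :
    AnalyticAt ℂ (fun z => Complex.Gamma (z - c)) x := by
  have h2 : AnalyticAt ℂ (fun z => ((Complex.Gamma (z - c))⁻¹)⁻¹) x :=
    AnalyticAt.inv (((diff_invGamma0 c).analyticAt x)) (by simpa using h)
  simpa using h2

private lemma cpow_analytic0 (b : ℂ) (hb : b ≠ 0) (c : ℂ) (x : ℂ) :
    AnalyticAt ℂ (fun z => b ^ (z - c)) x := by
  have : (fun z : ℂ => b ^ (z - c)) = fun z => Complex.exp (Complex.log b * (z - c)) := by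
    funext z
    rw [Complex.cpow_def_of_ne_zero hb]
  rw [this]
  exact (Complex.differentiable_exp.comp
    ((differentiable_id.sub_const c).const_mul _)).analyticAt x

private lemma meromSum0 {α : Type*} (N : Finset α) (f : α → ℂ → ℂ) (x : ℂ)
    (h : ∀ i ∈ N, MeromorphicAt (f i) x) :
    MeromorphicAt (fun z => ∑ i ∈ N, f i z) x := by
  classical
  induction N using Finset.induction with
  | empty => simpa using MeromorphicAt.const (0:ℂ) x
  | @insert a N ha ih =>
      simp only [Finset.sum_insert ha]
      exact (h a (Finset.mem_insert_self a N)).add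
        (ih fun i hi => h i (Finset.mem_insert_of_mem hi))

private lemma moment0 (t : ℝ) (ht : 0 < t) (j : ℕ) :
    ∫ x : ℝ, x ^ (2*j) * rexp (-t * x^2)
      = Real.Gamma ((2*(j:ℝ)+1)/2) * t ^ (-(2*(j:ℝ)+1)/2) := by
  have habs : ∀ x : ℝ, x ^ (2*j) * rexp (-t * x^2)
      = (fun y : ℝ => y ^ (2*j) * rexp (-t * y^2)) |x| := by
    intro x
    simp only [pow_mul, _root_.sq_abs]
  calc ∫ x : ℝ, x ^ (2*j) * rexp (-t * x^2)
      = ∫ x : ℝ, (fun y : ℝ => y ^ (2*j) * rexp (-t * y^2)) |x| := by simp_rw [← habs]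
    _ = 2 * ∫ x in Ioi (0:ℝ), x ^ (2*j) * rexp (-t * x^2) :=
        integral_comp_abs (f := fun y => y ^ (2*j) * rexp (-t * y^2))
    _ = Real.Gamma ((2*(j:ℝ)+1)/2) * t ^ (-(2*(j:ℝ)+1)/2) := by
        have h1 : ∫ x in Ioi (0:ℝ), x ^ ((2*j : ℕ) : ℝ) * rexp (-t * x ^ (2:ℝ))
            = t ^ (-(((2*j:ℕ):ℝ) + 1)/2) * (1/2) * Real.Gamma ((((2*j:ℕ):ℝ)+1)/2) :=
          integral_rpow_mul_exp_neg_mul_rpow (by norm_num) (by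
            have : (0:ℝ) ≤ ((2*j:ℕ):ℝ) := Nat.cast_nonneg _
            linarith) ht
        have h2 : ∀ x ∈ Ioi (0:ℝ), x ^ ((2*j:ℕ):ℝ) * rexp (-t * x ^ (2:ℝ))
            = x ^ (2*j) * rexp (-t * x^2) := by
          intro x hx
          rw [rpow_natCast, rpow_two]
        rw [setIntegral_congr_fun measurableSet_Ioi h2] at h1
        rw [h1]
        push_cast
        ring

private lemma integrable_term0 (t : ℝ) (ht : 0 < t) (c : ℂ) (k : ℕ) :
    Integrable fun x : ℝ => Complex.exp (-(t:ℂ) * (x:ℂ)^2) * (c * (Complex.I * x)^k) := by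
  have hbase : Integrable fun x : ℝ => x ^ (k:ℝ) * rexp (-t * x^2) :=
    integrable_rpow_mul_exp_neg_mul_sq ht
      (by have := Nat.cast_nonneg (α := ℝ) k; linarith)
  refine Integrable.mono' ((hbase.abs).const_mul ‖c‖) ?_ ?_
  · apply Continuous.aestronglyMeasurable
    continuity
  · filter_upwards with x
    rw [norm_mul, Complex.norm_exp]
    have h1 : (-(t:ℂ) * (x:ℂ)^2).re = -t * x^2 := by
      simp [← Complex.ofReal_pow]
    rw [h1, norm_mul, norm_pow, norm_mul]
    simp only [Complex.norm_I, one_mul, Complex.norm_real, Real.norm_eq_abs]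
    apply le_of_eq
    rw [abs_mul, Real.abs_exp, Real.rpow_natCast, _root_.abs_pow]
    ring

private lemma term_value0 (t : ℝ) (c : ℂ) (k : ℕ) :
    ∫ x : ℝ, Complex.exp (-(t:ℂ) * (x:ℂ)^2) * (c * (Complex.I * x)^k)
      = c * Complex.I ^ k * ((∫ x : ℝ, x ^ k * rexp (-t * x^2) : ℝ) : ℂ) := by
  have : ∀ x : ℝ, Complex.exp (-(t:ℂ) * (x:ℂ)^2) * (c * (Complex.I * x)^k)
      = (c * Complex.I ^ k) * (((x ^ k * rexp (-t * x^2) : ℝ)) : ℂ) := by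
    intro x
    rw [mul_pow]
    push_cast
    rw [show (-(t:ℂ) * (x:ℂ)^2) = ((-(t * x^2) : ℝ) : ℂ) by push_cast; ring,
      ← Complex.ofReal_exp]
    push_cast
    ring
  simp_rw [this]
  rw [MeasureTheory.integral_const_mul]
  exact congrArg (fun w => c * Complex.I ^ k * w) integral_ofReal

private lemma innerEq0 (P : Polynomial ℂ) (hodd : ∀ k : ℕ, Odd k → P.coeff k = 0)
    (t : ℝ) (ht : 0 < t) :
    (∫ lam : ℝ, Complex.exp (-(t:ℂ) * (lam:ℂ)^2) * P.eval (Complex.I * lam))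
      = ∑ k ∈ Finset.range (P.natDegree + 1),
          P.coeff k * Complex.I ^ k *
            ((Real.Gamma (((k:ℝ)+1)/2) * t ^ (-((k:ℝ)+1)/2) : ℝ) : ℂ) := by
  have hev : ∀ lam : ℝ, Complex.exp (-(t:ℂ) * (lam:ℂ)^2) * P.eval (Complex.I * lam)
      = ∑ k ∈ Finset.range (P.natDegree + 1),
          Complex.exp (-(t:ℂ) * (lam:ℂ)^2) * (P.coeff k * (Complex.I * lam) ^ k) := by
    intro lam
    rw [Polynomial.eval_eq_sum_range, Finset.mul_sum]
  simp_rw [hev]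
  rw [integral_finset_sum _ (fun k _ => integrable_term0 t ht (P.coeff k) k)]
  refine Finset.sum_congr rfl fun k _ => ?_
  rw [term_value0 t (P.coeff k) k]
  rcases Nat.even_or_odd k with ⟨j, hj⟩ | hk
  · subst hj
    rw [show j + j = 2 * j by ring, moment0 t ht j]
    congr 2
    all_goals (push_cast; ring_nf)
  · rw [hodd k hk]
    simp

private lemma intOn_cpow_exp0 (w : ℂ) (hw : 0 < w.re) (r : ℝ) (hr : 0 < r) :
    IntegrableOn (fun t : ℝ => (t:ℂ) ^ (w - 1) * Complex.exp (-((r:ℂ) * t))) (Ioi 0) := by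
  have hbase : IntegrableOn (fun x : ℝ => rexp (-x) * x ^ (w.re - 1)) (Ioi 0) :=
    Real.GammaIntegral_convergent hw
  have hscale : IntegrableOn (fun x : ℝ => rexp (-(r*x)) * (r*x) ^ (w.re - 1)) (Ioi 0) := by
    have := (integrableOn_Ioi_comp_mul_left_iff
      (fun x : ℝ => rexp (-x) * x ^ (w.re - 1)) 0 hr).mpr
    simp only [mul_zero] at this
    exact this hbase
  have hbound : IntegrableOn (fun x : ℝ => r ^ (1 - w.re) *
      (rexp (-(r*x)) * (r*x) ^ (w.re - 1))) (Ioi 0) := hscale.const_mul _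
  refine Integrable.mono' hbound ?_ ?_
  · apply ContinuousOn.aestronglyMeasurable _ measurableSet_Ioi
    intro t ht
    apply ContinuousAt.continuousWithinAt
    apply ContinuousAt.mul
    · exact (continuousAt_cpow_const
        (by rw [Complex.mem_slitPlane_iff]; left; simpa using ht)).comp
        Complex.continuous_ofReal.continuousAt
    · exact (Complex.continuous_exp.comp
        ((continuous_const.mul Complex.continuous_ofReal).neg)).continuousAt
  · filter_upwards [ae_restrict_mem measurableSet_Ioi] with t ht
    rw [norm_mul]
    have h1 : ‖(t:ℂ) ^ (w - 1)‖ = t ^ (w.re - 1) := by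
      rw [Complex.norm_cpow_eq_rpow_re_of_pos ht]
      norm_num
    have h2 : ‖Complex.exp (-((r:ℂ) * t))‖ = rexp (-(r*t)) := by
      rw [Complex.norm_exp]
      congr 1
      simp [← Complex.ofReal_mul]
    rw [h1, h2]
    apply le_of_eq
    rw [Real.mul_rpow hr.le (le_of_lt ht)]
    have hr1 : r ^ (1 - w.re) * r ^ (w.re - 1) = 1 := by
      rw [← Real.rpow_add hr]; norm_num
    calc t ^ (w.re-1) * rexp (-(r*t))
        = (r ^ (1-w.re) * r ^ (w.re-1)) * (t^(w.re-1) * rexp (-(r*t))) := by rw [hr1]; ring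
      _ = _ := by ring

/-- The term functions of the meromorphic continuation. -/
noncomputable def stmt2Term (P : Polynomial ℂ) (s : ℝ) (k : ℕ) : ℂ → ℂ :=
  fun z => P.coeff k * Complex.I ^ k * ((Real.Gamma (((k:ℝ)+1)/2) : ℝ) : ℂ) *
    ((1 / (((s^2 : ℝ)) : ℂ)) ^ (z - ((((k:ℝ)+1)/2 : ℝ) : ℂ)) *
      Complex.Gamma (z - ((((k:ℝ)+1)/2 : ℝ) : ℂ)))

theorem stmt2 (P : Polynomial ℂ) (hP : ∀ x : ℂ, P.eval (-x) = P.eval x)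
    (s : ℝ) (hs : 0 < s)
    (F : ℂ → ℂ)
    (hF : ∀ z : ℂ, F z = ∫ t in Set.Ioi (0 : ℝ), (t : ℂ) ^ (z - 1) *
        Complex.exp (-(t : ℂ) * (s : ℂ) ^ 2) *
        ∫ lam : ℝ, Complex.exp (-(t : ℂ) * (lam : ℂ) ^ 2) * P.eval (Complex.I * lam)) :
    ∃ G : ℂ → ℂ, (∀ z : ℂ, MeromorphicAt G z) ∧ AnalyticAt ℂ G 0 ∧
      (∃ N : ℝ, ∀ z : ℂ, N < z.re → G z = F z) ∧
      G 0 = -2 * (π : ℂ) * ∫ r in (0 : ℝ)..s, P.eval (r : ℂ) := by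
  classical
  have hodd : ∀ k : ℕ, Odd k → P.coeff k = 0 := fun k hk => oddCoeff0 P hP hk
  set n := P.natDegree with hn
  have hs2 : (0:ℝ) < s^2 := by positivity
  have hbne : (1 / (((s^2 : ℝ)) : ℂ)) ≠ 0 :=
    one_div_ne_zero (Complex.ofReal_ne_zero.mpr hs2.ne')
  refine ⟨fun z => ∑ k ∈ Finset.range (n+1), stmt2Term P s k z, ?_, ?_, ?_, ?_⟩
  · -- meromorphic everywhere
    intro x
    apply meromSum0
    intro k _
    unfold stmt2Term
    exact (MeromorphicAt.const _ x).mul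
      (((cpow_analytic0 _ hbne _ x).meromorphicAt).mul (gamma_shift_merom0 _ x))
  · -- analytic at 0
    apply Finset.analyticAt_fun_sum
    intro k _
    rcases Nat.even_or_odd k with ⟨j, hj⟩ | hk
    · have hne : Complex.Gamma ((0:ℂ) - ((((k:ℝ)+1)/2 : ℝ) : ℂ)) ≠ 0 := by
        apply Complex.Gamma_ne_zero
        intro m hm
        rw [zero_sub, neg_eq_iff_eq_neg, ← Complex.ofReal_natCast, neg_neg] at hm
        have hm' : ((k:ℝ)+1)/2 = (m:ℝ) := Complex.ofReal_inj.mp hm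
        have : (k:ℝ) + 1 = 2*(m:ℝ) := by linarith
        have hknat : k + 1 = 2*m := by exact_mod_cast this
        omega
      unfold stmt2Term
      exact (analyticAt_const.mul
        ((cpow_analytic0 _ hbne _ 0).mul (gamma_shift_analytic0 _ 0 hne)))
    · have hzero : stmt2Term P s k = fun _ => 0 := by
        funext z; unfold stmt2Term; rw [hodd k hk]; simp
      rw [hzero]
      exact analyticAt_const
  · -- agrees with F on a half-plane
    refine ⟨((n:ℝ)+1)/2, fun z hz => ?_⟩
    rw [hF z]
    have hre : ∀ k ∈ Finset.range (n+1), 0 < (z - ((((k:ℝ)+1)/2 : ℝ) : ℂ)).re := by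
      intro k hk
      rw [Finset.mem_range] at hk
      have : (k:ℝ) ≤ (n:ℝ) := by exact_mod_cast Nat.lt_succ_iff.mp hk
      simp only [Complex.sub_re, Complex.ofReal_re]
      have : ((k:ℝ)+1)/2 ≤ ((n:ℝ)+1)/2 := by linarith
      linarith
    have hptwise : ∀ t ∈ Ioi (0:ℝ),
        ((t : ℂ) ^ (z - 1) * Complex.exp (-(t : ℂ) * (s : ℂ) ^ 2) *
          ∫ lam : ℝ, Complex.exp (-(t : ℂ) * (lam : ℂ) ^ 2) * P.eval (Complex.I * lam))
        = ∑ k ∈ Finset.range (n+1),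
            (P.coeff k * Complex.I ^ k * ((Real.Gamma (((k:ℝ)+1)/2) : ℝ) : ℂ)) *
              ((t:ℂ) ^ ((z - ((((k:ℝ)+1)/2 : ℝ) : ℂ)) - 1) *
                Complex.exp (-(((s^2 : ℝ) : ℂ) * t))) := by
      intro t ht
      rw [innerEq0 P hodd t ht, Finset.mul_sum]
      refine Finset.sum_congr rfl fun k _ => ?_
      have hexp : Complex.exp (-(t:ℂ) * (s:ℂ)^2) = Complex.exp (-((((s^2:ℝ)):ℂ) * t)) := by
        congr 1; push_cast; ring
      have hpow : ((t ^ (-((k:ℝ)+1)/2) : ℝ) : ℂ)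
          = (t:ℂ) ^ (((-((k:ℝ)+1)/2) : ℝ) : ℂ) := Complex.ofReal_cpow (le_of_lt ht) _
      have hcomb : (t:ℂ) ^ (z - 1) * (t:ℂ) ^ (((-((k:ℝ)+1)/2) : ℝ) : ℂ)
          = (t:ℂ) ^ ((z - ((((k:ℝ)+1)/2 : ℝ) : ℂ)) - 1) := by
        rw [← Complex.cpow_add _ _ (Complex.ofReal_ne_zero.mpr (ne_of_gt ht))]
        congr 1
        push_cast
        ring
      rw [Complex.ofReal_mul, hpow]
      calc (t:ℂ) ^ (z-1) * Complex.exp (-(t:ℂ)*(s:ℂ)^2) *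
            (P.coeff k * Complex.I ^ k *
              (((Real.Gamma (((k:ℝ)+1)/2) : ℝ) : ℂ) * (t:ℂ) ^ (((-((k:ℝ)+1)/2) : ℝ) : ℂ)))
          = (P.coeff k * Complex.I ^ k * ((Real.Gamma (((k:ℝ)+1)/2) : ℝ) : ℂ)) *
              (((t:ℂ) ^ (z - 1) * (t:ℂ) ^ (((-((k:ℝ)+1)/2) : ℝ) : ℂ)) *
                Complex.exp (-(t:ℂ)*(s:ℂ)^2)) := by ring
        _ = _ := by rw [hcomb, hexp]
    rw [setIntegral_congr_fun measurableSet_Ioi hptwise]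
    rw [integral_finset_sum _ (fun k hk =>
      ((intOn_cpow_exp0 _ (hre k hk) (s^2) hs2).const_mul _))]
    refine Finset.sum_congr rfl fun k hk => ?_
    rw [MeasureTheory.integral_const_mul,
      integral_cpow_mul_exp_neg_mul_Ioi (hre k hk) hs2]
    unfold stmt2Term
    push_cast
    ring
  · -- value at 0
    have hterm : ∀ k ∈ Finset.range (n+1),
        stmt2Term P s k 0 = -2 * (π:ℂ) * (P.coeff k * ((s ^ (k+1) : ℝ) : ℂ) / ((k:ℂ)+1)) := by
      intro k _
      rcases Nat.even_or_odd k with ⟨j, hj⟩ | hk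
      · have hj2 : k = 2*j := by omega
        subst hj2
        unfold stmt2Term
        have hpowval : (1 / (((s^2 : ℝ)) : ℂ)) ^ ((0:ℂ) - ((((((2*j:ℕ):ℝ)+1)/2) : ℝ) : ℂ))
            = ((s ^ (2*j+1) : ℝ) : ℂ) := by
          rw [zero_sub, one_div, inv_cpow _ _ (by
            rw [Complex.arg_ofReal_of_nonneg hs2.le]
            exact Real.pi_ne_zero.symm), ← Complex.cpow_neg, neg_neg]
          rw [← Complex.ofReal_cpow hs2.le]
          congr 1
          rw [← Real.rpow_natCast s 2, ← Real.rpow_mul hs.le, ← Real.rpow_natCast s (2*j+1)]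
          congr 1
          push_cast
          ring
        rw [hpowval]
        have hgam : ((Real.Gamma (((((2*j:ℕ)):ℝ)+1)/2) : ℝ) : ℂ)
            = Complex.Gamma ((j:ℂ) + 1/2) := by
          rw [← Complex.Gamma_ofReal]
          congr 1
          all_goals (push_cast; ring)
        have hgam2 : Complex.Gamma ((0:ℂ) - ((((((2*j:ℕ)):ℝ)+1)/2 : ℝ) : ℂ))
            = Complex.Gamma (-(j:ℂ) - 1/2) := by
          congr 1
          all_goals (push_cast; ring)
        rw [hgam, hgam2]
        have hI : (Complex.I : ℂ) ^ (2*j) = (-1)^j := by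
          rw [pow_mul, Complex.I_sq]
        rw [hI]
        have h21 : ((2:ℂ) * (j:ℂ) + 1) ≠ 0 := by
          intro h; exact natHalfNe0 j (1/2) (by norm_num) (by linear_combination h / 2)
        have hk1 : (((2*j:ℕ):ℂ) + 1) ≠ 0 := by
          intro h
          push_cast at h
          exact h21 (by linear_combination h)
        have this2 : Complex.Gamma ((j:ℂ)+1/2) * Complex.Gamma (-(j:ℂ)-1/2) * (2*(j:ℂ)+1)
            = -((-1:ℂ)^j) * 2 * (π:ℂ) := by
          have h := gammaProd0 j
          rw [eq_div_iff h21] at h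
          linear_combination h
        have hsq : ((-1:ℂ))^j * (-1)^j = 1 := by
          rw [← pow_add]
          exact Even.neg_one_pow ⟨j, rfl⟩
        apply mul_right_cancel₀ hk1
        rw [← mul_div_assoc, div_mul_cancel₀ _ hk1]
        push_cast
        linear_combination ((-1:ℂ)^j * (P.coeff (2*j)) * ((s:ℂ))^(2*j+1)) * this2
          - (2*(π:ℂ)*(P.coeff (2*j))*((s:ℂ))^(2*j+1)) * hsq
      · unfold stmt2Term
        rw [hodd k hk]
        simp
    show (∑ k ∈ Finset.range (n+1), stmt2Term P s k 0) = _
    rw [Finset.sum_congr rfl hterm]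
    have hint : ∫ r in (0:ℝ)..s, P.eval (r : ℂ)
        = ∑ k ∈ Finset.range (n+1), P.coeff k * ((s ^ (k+1) : ℝ) : ℂ) / ((k:ℂ)+1) := by
      have hev : ∀ r : ℝ, P.eval (r : ℂ)
          = ∑ k ∈ Finset.range (n+1), P.coeff k * ((r:ℝ) ^ k : ℝ) := by
        intro r
        rw [Polynomial.eval_eq_sum_range]
        push_cast
        rfl
      simp_rw [hev]
      rw [intervalIntegral.integral_finset_sum]
      · refine Finset.sum_congr rfl fun k _ => ?_
        have : ∀ r : ℝ, (P.coeff k * ((r ^ k : ℝ) : ℂ)) = P.coeff k * (((r ^ k : ℝ)) : ℂ) :=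
          fun r => rfl
        rw [intervalIntegral.integral_const_mul]
        rw [intervalIntegral.integral_ofReal]
        rw [integral_pow]
        push_cast
        rw [mul_div_assoc]
        congr 2
        norm_num
      · intro k _
        apply Continuous.intervalIntegrable
        continuity
    rw [hint, Finset.mul_sum]
end

section
/- Let $k \geq 1$ be an integer, let $z \in \mathbb{C}$ with $|z| = 1$, let $x \in \mathbb{R}$ with $0 < x < 1$, and let $y \in \mathbb{C}$ with $|y| < x$. Then the following identity of absolutely convergent infinite products holds: $\prod_{p,q \geq 0} (1 - z^{k+p-q} y x^{p+q+1})(1 - z^{-k+p-q} y x^{p+q+1}) \cdot \prod_{p,q \geq 0} (1 - z^{k+p-q} y x^{p+q-1})(1 - z^{-k+p-q} y x^{p+q-1}) = (1 - z^{k} y x^{-1})(1 - z^{-k} y x^{-1}) \cdot \prod_{p,q \geq 0} (1 - z^{k+1+p-q} y x^{p+q})(1 - z^{-k-1+p-q} y x^{p+q})(1 - z^{k-1+p-q} y x^{p+q})(1 - z^{-k+1+p-q} y x^{p+q})$. -/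
open Complex


namespace Stmt9Aux

noncomputable def tt (z y : ℂ) (x : ℝ) (a b : ℤ) (pq : ℕ × ℕ) : ℂ :=
  z ^ (a + pq.1 - pq.2) * y * (x : ℂ) ^ ((pq.1 : ℤ) + pq.2 + b)

variable {z y : ℂ} {x : ℝ}

lemma tt_norm (hz : ‖z‖ = 1) (hx0 : 0 < x) (a b : ℤ) (pq : ℕ × ℕ) :
    ‖tt z y x a b pq‖ = ‖y‖ * x ^ ((pq.1 : ℤ) + pq.2 + b) := by
  have hx : ‖(x : ℂ)‖ = x := by
    rw [Complex.norm_real, Real.norm_eq_abs, abs_of_pos hx0]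
  rw [tt, norm_mul, norm_mul, norm_zpow, norm_zpow, hz, one_zpow, one_mul,
    hx]

lemma tt_norm_le (hz : ‖z‖ = 1) (hx0 : 0 < x) (hx1 : x < 1)
    (a : ℤ) {b : ℤ} (hb : -1 ≤ b) (pq : ℕ × ℕ) :
    ‖tt z y x a b pq‖ ≤ ‖y‖ / x := by
  rw [tt_norm hz hx0]
  have h1 : (-1 : ℤ) ≤ (pq.1 : ℤ) + pq.2 + b := by
    have : (0 : ℤ) ≤ (pq.1 : ℤ) + pq.2 := by positivity
    omega
  have h2 : x ^ ((pq.1 : ℤ) + pq.2 + b) ≤ x ^ (-1 : ℤ) :=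
    zpow_le_zpow_right_of_le_one₀ hx0 hx1.le h1
  calc ‖y‖ * x ^ ((pq.1 : ℤ) + pq.2 + b)
      ≤ ‖y‖ * x ^ (-1 : ℤ) := by
        exact mul_le_mul_of_nonneg_left h2 (norm_nonneg y)
    _ = ‖y‖ / x := by rw [zpow_neg_one]; rfl

lemma tt_summable_norm (hz : ‖z‖ = 1) (hx0 : 0 < x) (hx1 : x < 1) (a b : ℤ) :
    Summable fun pq : ℕ × ℕ => ‖tt z y x a b pq‖ := by
  have hgeo : Summable fun n : ℕ => x ^ n := summable_geometric_of_lt_one hx0.le hx1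
  have h2 : Summable fun pq : ℕ × ℕ => x ^ pq.1 * x ^ pq.2 :=
    hgeo.mul_of_nonneg hgeo (fun n => pow_nonneg hx0.le n) (fun n => pow_nonneg hx0.le n)
  refine ((h2.mul_left (‖y‖ * x ^ b)).congr fun pq => ?_)
  rw [tt_norm hz hx0, zpow_add₀ (ne_of_gt hx0), zpow_add₀ (ne_of_gt hx0), zpow_natCast,
    zpow_natCast]
  ring

end Stmt9Aux

namespace Stmt9Aux

variable {z y : ℂ} {x : ℝ}

lemma tt_ne_one (hz : ‖z‖ = 1) (hx0 : 0 < x) (hx1 : x < 1)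
    (hy : ‖y‖ < x) (a : ℤ) {b : ℤ} (hb : -1 ≤ b) (pq : ℕ × ℕ) :
    1 - tt z y x a b pq ≠ 0 := by
  intro h
  have h2 : tt z y x a b pq = 1 := by
    have := sub_eq_zero.mp h; exact this.symm
  have h3 := tt_norm_le hz hx0 hx1 a hb pq (z := z) (y := y)
  rw [h2, norm_one] at h3
  have : ‖y‖ / x < 1 := (div_lt_one hx0).mpr hy
  linarith

lemma norm_log_le (w : ℂ) {r : ℝ} (hr : r < 1) (hw : ‖w‖ ≤ r) :
    ‖Complex.log (1 - w)‖ ≤ ((1 - r)⁻¹ / 2 + 1) * ‖w‖ := by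
  have hw1 : ‖-w‖ < 1 := by rw [norm_neg]; linarith
  have h := Complex.norm_log_one_add_le hw1
  rw [norm_neg] at h
  have h1 : (1 - ‖w‖)⁻¹ ≤ (1 - r)⁻¹ := by
    apply inv_anti₀ <;> linarith [norm_nonneg w, hw]
  have hw0 := norm_nonneg w
  have hne : 1 + -w = 1 - w := by ring
  rw [hne] at h
  have hinv : (0:ℝ) ≤ (1 - ‖w‖)⁻¹ := inv_nonneg.mpr (by linarith)
  have key : ‖w‖ ^ 2 * (1 - ‖w‖)⁻¹ ≤ ‖w‖ * (1 - r)⁻¹ := by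
    have h2 : ‖w‖ * (1 - ‖w‖)⁻¹ ≤ 1 * (1 - r)⁻¹ :=
      mul_le_mul (by linarith) h1 hinv (by norm_num)
    calc ‖w‖ ^ 2 * (1 - ‖w‖)⁻¹ = ‖w‖ * (‖w‖ * (1 - ‖w‖)⁻¹) := by ring
      _ ≤ ‖w‖ * (1 * (1 - r)⁻¹) := mul_le_mul_of_nonneg_left h2 hw0
      _ = ‖w‖ * (1 - r)⁻¹ := by ring
  calc ‖Complex.log (1 - w)‖ ≤ ‖w‖ ^ 2 * (1 - ‖w‖)⁻¹ / 2 + ‖w‖ := h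
    _ ≤ ((1 - r)⁻¹ / 2 + 1) * ‖w‖ := by linarith

lemma tt_log_summable (hz : ‖z‖ = 1) (hx0 : 0 < x) (hx1 : x < 1)
    (hy : ‖y‖ < x) (a : ℤ) {b : ℤ} (hb : -1 ≤ b) :
    Summable fun pq : ℕ × ℕ => Complex.log (1 - tt z y x a b pq) := by
  set r : ℝ := ‖y‖ / x with hrdef
  have hr : r < 1 := (div_lt_one hx0).mpr hy
  apply Summable.of_norm_bounded
    (g := fun pq => ((1 - r)⁻¹ / 2 + 1) * ‖tt z y x a b pq‖)
    ((tt_summable_norm hz hx0 hx1 a b).mul_left _)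
  intro pq
  exact norm_log_le _ hr (tt_norm_le hz hx0 hx1 a hb pq)

lemma tt_multipliable (hz : ‖z‖ = 1) (hx0 : 0 < x) (hx1 : x < 1)
    (hy : ‖y‖ < x) (a : ℤ) {b : ℤ} (hb : -1 ≤ b) :
    Multipliable fun pq : ℕ × ℕ => 1 - tt z y x a b pq := by
  exact Complex.multipliable_of_summable_log (tt_log_summable hz hx0 hx1 hy a hb)

lemma tt_tprod_eq (hz : ‖z‖ = 1) (hx0 : 0 < x) (hx1 : x < 1)
    (hy : ‖y‖ < x) (a : ℤ) {b : ℤ} (hb : -1 ≤ b) :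
    ∏' pq : ℕ × ℕ, (1 - tt z y x a b pq) =
      Complex.exp (∑' pq : ℕ × ℕ, Complex.log (1 - tt z y x a b pq)) := by
  have := Complex.cexp_tsum_eq_tprod (f := fun pq => 1 - tt z y x a b pq)
    (fun pq => tt_ne_one hz hx0 hx1 hy a hb pq)
    (tt_log_summable hz hx0 hx1 hy a hb)
  exact this.symm

end Stmt9Aux

namespace Stmt9Aux

lemma inj_snd_succ : Function.Injective (fun pq : ℕ × ℕ => (pq.1, pq.2 + 1)) := by
  intro a b hab
  simp only [Prod.mk.injEq] at hab
  exact Prod.ext hab.1 (by omega)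

lemma inj_fst_zero : Function.Injective (fun p : ℕ => ((p, 0) : ℕ × ℕ)) := by
  intro a b hab
  simpa using hab

lemma tsum_split_snd {h : ℕ × ℕ → ℂ} (hs : Summable h) :
    ∑' pq : ℕ × ℕ, h pq = (∑' p : ℕ, h (p, 0)) + ∑' pq : ℕ × ℕ, h (pq.1, pq.2 + 1) := by
  have h1 : ∀ p : ℕ, Summable fun q => h (p, q) := fun p => hs.prod_factor p
  have h2 : Summable fun pq : ℕ × ℕ => h (pq.1, pq.2 + 1) := hs.comp_injective inj_snd_succ
  have h3 : Summable fun p : ℕ => h (p, 0) := hs.comp_injective inj_fst_zero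
  calc ∑' pq : ℕ × ℕ, h pq = ∑' (p : ℕ) (q : ℕ), h (p, q) := Summable.tsum_prod' hs h1
    _ = ∑' p : ℕ, (h (p, 0) + ∑' q : ℕ, h (p, q + 1)) :=
        tsum_congr fun p => Summable.tsum_eq_zero_add (h1 p)
    _ = (∑' p : ℕ, h (p, 0)) + ∑' (p : ℕ) (q : ℕ), h (p, q + 1) := Summable.tsum_add h3 h2.prod
    _ = (∑' p : ℕ, h (p, 0)) + ∑' pq : ℕ × ℕ, h (pq.1, pq.2 + 1) := by
        rw [← Summable.tsum_prod' h2 fun p => h2.prod_factor p]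

lemma tsum_split_fst {h : ℕ × ℕ → ℂ} (hs : Summable h) :
    ∑' pq : ℕ × ℕ, h pq = (∑' q : ℕ, h (0, q)) + ∑' pq : ℕ × ℕ, h (pq.1 + 1, pq.2) := by
  have e := Equiv.prodComm ℕ ℕ
  have hsg : Summable fun pq : ℕ × ℕ => h (pq.2, pq.1) := hs.prod_symm
  have step := tsum_split_snd hsg
  have e1 : ∑' pq : ℕ × ℕ, h (pq.2, pq.1) = ∑' pq : ℕ × ℕ, h pq :=
    (Equiv.prodComm ℕ ℕ).tsum_eq h
  have e2 : ∑' pq : ℕ × ℕ, h (pq.2 + 1, pq.1) = ∑' pq : ℕ × ℕ, h (pq.1 + 1, pq.2) :=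
    (Equiv.prodComm ℕ ℕ).tsum_eq (fun pq : ℕ × ℕ => h (pq.1 + 1, pq.2))
  rw [e1, e2] at step
  exact step

end Stmt9Aux

namespace Stmt9Aux

variable {z y : ℂ} {x : ℝ}

lemma tt_eq (z y : ℂ) (x : ℝ) (a b a' b' : ℤ) (p q p' q' : ℕ)
    (h1 : a + p - q = a' + p' - q') (h2 : (p : ℤ) + q + b = (p' : ℤ) + q' + b') :
    tt z y x a b (p, q) = tt z y x a' b' (p', q') := by
  simp only [tt]
  rw [h1, h2]

noncomputable def SS (z y : ℂ) (x : ℝ) (a b : ℤ) : ℂ :=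
  ∑' pq : ℕ × ℕ, Complex.log (1 - tt z y x a b pq)

lemma key_tsum (hz : ‖z‖ = 1) (hx0 : 0 < x) (hx1 : x < 1)
    (hy : ‖y‖ < x) (k : ℤ) :
    SS z y x k 1 + SS z y x (-k) 1 + SS z y x k (-1) + SS z y x (-k) (-1) =
      Complex.log (1 - tt z y x k (-1) (0, 0)) +
      Complex.log (1 - tt z y x (-k) (-1) (0, 0)) +
      (SS z y x (k + 1) 0 + SS z y x (-k - 1) 0 + SS z y x (k - 1) 0 +
        SS z y x (-k + 1) 0) := by
  have hbm : (-1 : ℤ) ≤ -1 := le_refl _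
  have hb0 : (-1 : ℤ) ≤ 0 := by norm_num
  have hb1 : (-1 : ℤ) ≤ 1 := by norm_num
  have hS : ∀ (a : ℤ) (b : ℤ), -1 ≤ b →
      Summable fun pq : ℕ × ℕ => Complex.log (1 - tt z y x a b pq) :=
    fun a b hb => tt_log_summable hz hx0 hx1 hy a hb
  -- F1 : SS k 1 = Q1
  have F1 : SS z y x k 1 = ∑' pq : ℕ × ℕ,
      Complex.log (1 - tt z y x (k + 1) 0 (pq.1, pq.2 + 1)) := by
    refine tsum_congr fun pq => ?_
    congr 1
    rw [show tt z y x k 1 pq = tt z y x k 1 (pq.1, pq.2) from rfl]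
    exact congrArg (fun w => 1 - w) <| tt_eq z y x k 1 (k + 1) 0 pq.1 pq.2 pq.1 (pq.2 + 1) (by push_cast; ring)
      (by push_cast; ring)
  -- F2 : SS (-k) 1 = Q2
  have F2 : SS z y x (-k) 1 = ∑' pq : ℕ × ℕ,
      Complex.log (1 - tt z y x (-k - 1) 0 (pq.1 + 1, pq.2)) := by
    refine tsum_congr fun pq => ?_
    congr 1
    rw [show tt z y x (-k) 1 pq = tt z y x (-k) 1 (pq.1, pq.2) from rfl]
    exact congrArg (fun w => 1 - w) <| tt_eq z y x (-k) 1 (-k - 1) 0 pq.1 pq.2 (pq.1 + 1) pq.2 (by push_cast; ring)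
      (by push_cast; ring)
  -- F5 : split of SS (k+1) 0
  have F5 : SS z y x (k + 1) 0 =
      (∑' p : ℕ, Complex.log (1 - tt z y x (k + 1) 0 (p, 0))) +
      ∑' pq : ℕ × ℕ, Complex.log (1 - tt z y x (k + 1) 0 (pq.1, pq.2 + 1)) :=
    tsum_split_snd (hS (k + 1) 0 hb0)
  -- F6 : split of SS (-k-1) 0
  have F6 : SS z y x (-k - 1) 0 =
      (∑' q : ℕ, Complex.log (1 - tt z y x (-k - 1) 0 (0, q))) +
      ∑' pq : ℕ × ℕ, Complex.log (1 - tt z y x (-k - 1) 0 (pq.1 + 1, pq.2)) :=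
    tsum_split_fst (hS (-k - 1) 0 hb0)
  -- F3 : SS k (-1)
  have F3 : SS z y x k (-1) =
      Complex.log (1 - tt z y x k (-1) (0, 0)) +
      (∑' p : ℕ, Complex.log (1 - tt z y x (k + 1) 0 (p, 0))) +
      SS z y x (k - 1) 0 := by
    have s1 := tsum_split_snd (hS k (-1) hbm)
    have hrow : Summable fun p : ℕ => Complex.log (1 - tt z y x k (-1) (p, 0)) :=
      (hS k (-1) hbm).comp_injective inj_fst_zero
    have s2 := Summable.tsum_eq_zero_add hrow
    have e1 : ∑' p : ℕ, Complex.log (1 - tt z y x k (-1) (p + 1, 0)) =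
        ∑' p : ℕ, Complex.log (1 - tt z y x (k + 1) 0 (p, 0)) := by
      refine tsum_congr fun p => ?_
      congr 1
      exact congrArg (fun w => 1 - w) <| tt_eq z y x k (-1) (k + 1) 0 (p + 1) 0 p 0 (by push_cast; ring)
        (by push_cast; ring)
    have e2 : ∑' pq : ℕ × ℕ, Complex.log (1 - tt z y x k (-1) (pq.1, pq.2 + 1)) =
        SS z y x (k - 1) 0 := by
      refine tsum_congr fun pq => ?_
      congr 1
      rw [show tt z y x (k - 1) 0 pq = tt z y x (k - 1) 0 (pq.1, pq.2) from rfl]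
      exact congrArg (fun w => 1 - w) <| tt_eq z y x k (-1) (k - 1) 0 pq.1 (pq.2 + 1) pq.1 pq.2 (by push_cast; ring)
        (by push_cast; ring)
    rw [SS, s1, s2, e1, e2]
  -- F4 : SS (-k) (-1)
  have F4 : SS z y x (-k) (-1) =
      Complex.log (1 - tt z y x (-k) (-1) (0, 0)) +
      (∑' q : ℕ, Complex.log (1 - tt z y x (-k - 1) 0 (0, q))) +
      SS z y x (-k + 1) 0 := by
    have s1 := tsum_split_fst (hS (-k) (-1) hbm)
    have hcol : Summable fun q : ℕ => Complex.log (1 - tt z y x (-k) (-1) (0, q)) :=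
      (hS (-k) (-1) hbm).comp_injective (fun a b hab => by simpa using hab)
    have s2 := Summable.tsum_eq_zero_add hcol
    have e1 : ∑' q : ℕ, Complex.log (1 - tt z y x (-k) (-1) (0, q + 1)) =
        ∑' q : ℕ, Complex.log (1 - tt z y x (-k - 1) 0 (0, q)) := by
      refine tsum_congr fun q => ?_
      congr 1
      exact congrArg (fun w => 1 - w) <| tt_eq z y x (-k) (-1) (-k - 1) 0 0 (q + 1) 0 q (by push_cast; ring)
        (by push_cast; ring)
    have e2 : ∑' pq : ℕ × ℕ, Complex.log (1 - tt z y x (-k) (-1) (pq.1 + 1, pq.2)) =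
        SS z y x (-k + 1) 0 := by
      refine tsum_congr fun pq => ?_
      congr 1
      rw [show tt z y x (-k + 1) 0 pq = tt z y x (-k + 1) 0 (pq.1, pq.2) from rfl]
      exact congrArg (fun w => 1 - w) <| tt_eq z y x (-k) (-1) (-k + 1) 0 (pq.1 + 1) pq.2 pq.1 pq.2 (by push_cast; ring)
        (by push_cast; ring)
    rw [SS, s1, s2, e1, e2]
  rw [F1, F2, F3, F4, F5, F6]
  ring

end Stmt9Aux

open Stmt9Aux

theorem stmt9 (k : ℤ) (hk : 1 ≤ k) (z : ℂ) (hz : ‖z‖ = 1)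
    (x : ℝ) (hx0 : 0 < x) (hx1 : x < 1) (y : ℂ) (hy : ‖y‖ < x) :
    (Multipliable fun pq : ℕ × ℕ =>
        (1 - z ^ (k + pq.1 - pq.2) * y * (x : ℂ) ^ ((pq.1 : ℤ) + pq.2 + 1)) *
        (1 - z ^ (-k + pq.1 - pq.2) * y * (x : ℂ) ^ ((pq.1 : ℤ) + pq.2 + 1))) ∧
    (Multipliable fun pq : ℕ × ℕ =>
        (1 - z ^ (k + pq.1 - pq.2) * y * (x : ℂ) ^ ((pq.1 : ℤ) + pq.2 - 1)) *
        (1 - z ^ (-k + pq.1 - pq.2) * y * (x : ℂ) ^ ((pq.1 : ℤ) + pq.2 - 1))) ∧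
    (Multipliable fun pq : ℕ × ℕ =>
        (1 - z ^ (k + 1 + pq.1 - pq.2) * y * (x : ℂ) ^ ((pq.1 : ℤ) + pq.2)) *
        (1 - z ^ (-k - 1 + pq.1 - pq.2) * y * (x : ℂ) ^ ((pq.1 : ℤ) + pq.2)) *
        (1 - z ^ (k - 1 + pq.1 - pq.2) * y * (x : ℂ) ^ ((pq.1 : ℤ) + pq.2)) *
        (1 - z ^ (-k + 1 + pq.1 - pq.2) * y * (x : ℂ) ^ ((pq.1 : ℤ) + pq.2))) ∧
    (∏' pq : ℕ × ℕ,
        (1 - z ^ (k + pq.1 - pq.2) * y * (x : ℂ) ^ ((pq.1 : ℤ) + pq.2 + 1)) *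
        (1 - z ^ (-k + pq.1 - pq.2) * y * (x : ℂ) ^ ((pq.1 : ℤ) + pq.2 + 1))) *
      (∏' pq : ℕ × ℕ,
        (1 - z ^ (k + pq.1 - pq.2) * y * (x : ℂ) ^ ((pq.1 : ℤ) + pq.2 - 1)) *
        (1 - z ^ (-k + pq.1 - pq.2) * y * (x : ℂ) ^ ((pq.1 : ℤ) + pq.2 - 1))) =
      (1 - z ^ k * y * (x : ℂ) ^ (-1 : ℤ)) * (1 - z ^ (-k) * y * (x : ℂ) ^ (-1 : ℤ)) *
      ∏' pq : ℕ × ℕ,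
        (1 - z ^ (k + 1 + pq.1 - pq.2) * y * (x : ℂ) ^ ((pq.1 : ℤ) + pq.2)) *
        (1 - z ^ (-k - 1 + pq.1 - pq.2) * y * (x : ℂ) ^ ((pq.1 : ℤ) + pq.2)) *
        (1 - z ^ (k - 1 + pq.1 - pq.2) * y * (x : ℂ) ^ ((pq.1 : ℤ) + pq.2)) *
        (1 - z ^ (-k + 1 + pq.1 - pq.2) * y * (x : ℂ) ^ ((pq.1 : ℤ) + pq.2)) := by
  have hb1 : (-1 : ℤ) ≤ 1 := by norm_num
  have hb0 : (-1 : ℤ) ≤ 0 := by norm_num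
  have hbm : (-1 : ℤ) ≤ -1 := le_refl _
  have Tm : ∀ (a : ℤ) {b : ℤ}, -1 ≤ b → Multipliable fun pq : ℕ × ℕ => 1 - tt z y x a b pq :=
    fun a _ hb => tt_multipliable hz hx0 hx1 hy a hb
  have Tp : ∀ (a : ℤ) {b : ℤ}, -1 ≤ b →
      ∏' pq : ℕ × ℕ, (1 - tt z y x a b pq) = Complex.exp (SS z y x a b) :=
    fun a _ hb => tt_tprod_eq hz hx0 hx1 hy a hb
  -- pointwise identifications
  have E1 : ∀ pq : ℕ × ℕ,
      (1 - tt z y x k 1 pq) * (1 - tt z y x (-k) 1 pq) =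
      (1 - z ^ (k + pq.1 - pq.2) * y * (x : ℂ) ^ ((pq.1 : ℤ) + pq.2 + 1)) *
        (1 - z ^ (-k + pq.1 - pq.2) * y * (x : ℂ) ^ ((pq.1 : ℤ) + pq.2 + 1)) :=
    fun pq => rfl
  have E2 : ∀ pq : ℕ × ℕ,
      (1 - tt z y x k (-1) pq) * (1 - tt z y x (-k) (-1) pq) =
      (1 - z ^ (k + pq.1 - pq.2) * y * (x : ℂ) ^ ((pq.1 : ℤ) + pq.2 - 1)) *
        (1 - z ^ (-k + pq.1 - pq.2) * y * (x : ℂ) ^ ((pq.1 : ℤ) + pq.2 - 1)) := by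
    intro pq
    simp only [tt, sub_eq_add_neg]
  have E3 : ∀ pq : ℕ × ℕ,
      (1 - tt z y x (k + 1) 0 pq) * (1 - tt z y x (-k - 1) 0 pq) *
        (1 - tt z y x (k - 1) 0 pq) * (1 - tt z y x (-k + 1) 0 pq) =
      (1 - z ^ (k + 1 + pq.1 - pq.2) * y * (x : ℂ) ^ ((pq.1 : ℤ) + pq.2)) *
        (1 - z ^ (-k - 1 + pq.1 - pq.2) * y * (x : ℂ) ^ ((pq.1 : ℤ) + pq.2)) *
        (1 - z ^ (k - 1 + pq.1 - pq.2) * y * (x : ℂ) ^ ((pq.1 : ℤ) + pq.2)) *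
        (1 - z ^ (-k + 1 + pq.1 - pq.2) * y * (x : ℂ) ^ ((pq.1 : ℤ) + pq.2)) := by
    intro pq
    simp only [tt, add_zero]
  refine ⟨((Tm k hb1).mul (Tm (-k) hb1)).congr E1,
    ((Tm k hbm).mul (Tm (-k) hbm)).congr E2,
    ((((Tm (k + 1) hb0).mul (Tm (-k - 1) hb0)).mul (Tm (k - 1) hb0)).mul
      (Tm (-k + 1) hb0)).congr E3, ?_⟩
  -- the three tprods
  have P1 : (∏' pq : ℕ × ℕ,
      (1 - z ^ (k + pq.1 - pq.2) * y * (x : ℂ) ^ ((pq.1 : ℤ) + pq.2 + 1)) *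
        (1 - z ^ (-k + pq.1 - pq.2) * y * (x : ℂ) ^ ((pq.1 : ℤ) + pq.2 + 1))) =
      Complex.exp (SS z y x k 1) * Complex.exp (SS z y x (-k) 1) := by
    rw [← tprod_congr E1, Multipliable.tprod_mul (Tm k hb1) (Tm (-k) hb1), Tp k hb1, Tp (-k) hb1]
  have P2 : (∏' pq : ℕ × ℕ,
      (1 - z ^ (k + pq.1 - pq.2) * y * (x : ℂ) ^ ((pq.1 : ℤ) + pq.2 - 1)) *
        (1 - z ^ (-k + pq.1 - pq.2) * y * (x : ℂ) ^ ((pq.1 : ℤ) + pq.2 - 1))) =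
      Complex.exp (SS z y x k (-1)) * Complex.exp (SS z y x (-k) (-1)) := by
    rw [← tprod_congr E2, Multipliable.tprod_mul (Tm k hbm) (Tm (-k) hbm), Tp k hbm, Tp (-k) hbm]
  have P3 : (∏' pq : ℕ × ℕ,
      (1 - z ^ (k + 1 + pq.1 - pq.2) * y * (x : ℂ) ^ ((pq.1 : ℤ) + pq.2)) *
        (1 - z ^ (-k - 1 + pq.1 - pq.2) * y * (x : ℂ) ^ ((pq.1 : ℤ) + pq.2)) *
        (1 - z ^ (k - 1 + pq.1 - pq.2) * y * (x : ℂ) ^ ((pq.1 : ℤ) + pq.2)) *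
        (1 - z ^ (-k + 1 + pq.1 - pq.2) * y * (x : ℂ) ^ ((pq.1 : ℤ) + pq.2))) =
      Complex.exp (SS z y x (k + 1) 0) * Complex.exp (SS z y x (-k - 1) 0) *
        Complex.exp (SS z y x (k - 1) 0) * Complex.exp (SS z y x (-k + 1) 0) := by
    rw [← tprod_congr E3,
      Multipliable.tprod_mul (((Tm (k + 1) hb0).mul (Tm (-k - 1) hb0)).mul (Tm (k - 1) hb0)) (Tm (-k + 1) hb0),
      Multipliable.tprod_mul ((Tm (k + 1) hb0).mul (Tm (-k - 1) hb0)) (Tm (k - 1) hb0),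
      Multipliable.tprod_mul (Tm (k + 1) hb0) (Tm (-k - 1) hb0),
      Tp (k + 1) hb0, Tp (-k - 1) hb0, Tp (k - 1) hb0, Tp (-k + 1) hb0]
  -- the extra factors
  have hf1 : (1 - z ^ k * y * (x : ℂ) ^ (-1 : ℤ)) = 1 - tt z y x k (-1) (0, 0) := by
    simp [tt]
  have hf2 : (1 - z ^ (-k) * y * (x : ℂ) ^ (-1 : ℤ)) = 1 - tt z y x (-k) (-1) (0, 0) := by
    simp [tt]
  have hne1 : (1 - tt z y x k (-1) (0, 0)) ≠ 0 := tt_ne_one hz hx0 hx1 hy k hbm (0, 0)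
  have hne2 : (1 - tt z y x (-k) (-1) (0, 0)) ≠ 0 := tt_ne_one hz hx0 hx1 hy (-k) hbm (0, 0)
  rw [P1, P2, P3, hf1, hf2, ← Complex.exp_log hne1, ← Complex.exp_log hne2]
  rw [← Complex.exp_add, ← Complex.exp_add, ← Complex.exp_add, ← Complex.exp_add,
    ← Complex.exp_add, ← Complex.exp_add, ← Complex.exp_add, ← Complex.exp_add]
  congr 1
  linear_combination key_tsum hz hx0 hx1 hy k
end
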